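/- For every r ∈ [0, B): Rev_{F*}(r) = 2L − L²/B. That is, the seller's two-bidder second-price revenue against F* is the same for every reserve price in [0, B). -/

import Mathlib

open MeasureTheory intervalIntegral

/-- Against the generalized equal-revenue distribution `F*` with support `[L, B]`,
the seller's two-bidder second-price revenue is `2L - L²/B` for every reserve price
`r ∈ [0, B)`. -/
theorem equal_revenue_indifference (B μ L : ℝ) (hB : 0 < B) (hμ0 : 0 < μ) (hμB : μ < B)
    (hL : L ∈ Set.Ioo (0 : ℝ) B) (hLμ : L * (1 + Real.log (B / L)) = μ)
    (F : ℝ → ℝ)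
    (hF : ∀ v, F v = if v < L then 0 else if v < B then 1 - L / v else 1)
    (r : ℝ) (hr : r ∈ Set.Ico (0 : ℝ) B) :
    r * (1 - (F r) ^ 2) + (∫ t in r..B, (1 - F t) ^ 2) = 2 * L - L ^ 2 / B := by
  obtain ⟨hL0, hLB⟩ := hL
  obtain ⟨hr0, hrB⟩ := hr
  set g : ℝ → ℝ := fun t => if t < L then 1 else L ^ 2 * t ^ (-2 : ℤ) with hg
  have hneB : ∀ᵐ x : ℝ, x ≠ B := by
    have : (volume ({B} : Set ℝ)) = 0 := Real.volume_singleton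
    simpa [ae_iff] using this
  -- integrand equals g a.e. on (r, B]
  have hfg : ∫ t in r..B, (1 - F t) ^ 2 = ∫ t in r..B, g t := by
    apply intervalIntegral.integral_congr_ae
    filter_upwards [hneB] with x hx hxmem
    rw [Set.uIoc_of_le hrB.le] at hxmem
    obtain ⟨hx1, hx2⟩ := hxmem
    have hxB : x < B := lt_of_le_of_ne hx2 hx
    rw [hF x]
    by_cases hxL : x < L
    · simp [hg, hxL]
    · have hx0 : 0 < x := lt_of_lt_of_le hL0 (not_lt.mp hxL)
      simp only [hg, hxL, hxB, if_false, if_true]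
      rw [zpow_neg, zpow_two]
      field_simp
      ring
  -- integral of g on [a, B] for L ≤ a < B
  have key : ∀ a : ℝ, L ≤ a → a < B → (∫ t in a..B, g t) = L ^ 2 * (a⁻¹ - B⁻¹) := by
    intro a ha haB
    have ha0 : 0 < a := lt_of_lt_of_le hL0 ha
    have h0 : (0 : ℝ) ∉ Set.uIcc a B := by
      rw [Set.uIcc_of_le haB.le]
      rintro ⟨h1, -⟩; linarith
    have : (∫ t in a..B, g t) = ∫ t in a..B, L ^ 2 * t ^ (-2 : ℤ) := by
      apply integral_congr
      intro x hx
      rw [Set.uIcc_of_le haB.le] at hx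
      have : ¬ x < L := not_lt.mpr (le_trans ha hx.1)
      simp [hg, this]
    rw [this, intervalIntegral.integral_const_mul,
      integral_zpow (Or.inr ⟨by norm_num, h0⟩)]
    have hB0 : B ≠ 0 := ne_of_gt hB
    have ha0' : a ≠ 0 := ne_of_gt ha0
    rw [show (-2 : ℤ) + 1 = -1 by norm_num]
    simp only [zpow_neg, zpow_one]
    push_cast
    ring
  by_cases hrL : r < L
  · -- r < L : F r = 0
    have hFr : F r = 0 := by rw [hF r]; simp [hrL]
    -- split the integral of g at L
    have hint1 : IntervalIntegrable g volume r L := by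
      apply (_root_.intervalIntegrable_const (c := (1 : ℝ))).congr_ae
      rw [Filter.eventuallyEq_iff_exists_mem]
      refine ⟨Set.Iio L, ?_, fun x hx => by simp [hg, hx.out]⟩
      rw [mem_ae_iff]
      have : (Set.Iio L)ᶜ ∩ Set.uIoc r L = {L} := by
        rw [Set.uIoc_of_le hrL.le]
        ext x
        simp only [Set.mem_inter_iff, Set.mem_compl_iff, Set.mem_Iio, not_lt,
          Set.mem_Ioc, Set.mem_singleton_iff]
        constructor
        · rintro ⟨h1, -, h2⟩; linarith
        · rintro rfl; exact ⟨le_refl _, hrL, le_refl _⟩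
      rw [Measure.restrict_apply (by measurability), this, Real.volume_singleton]
    have hint2 : IntervalIntegrable g volume L B := by
      apply IntervalIntegrable.congr_ae (f := fun t => L ^ 2 * t ^ (-2 : ℤ))
      · apply IntervalIntegrable.const_mul
        apply intervalIntegrable_zpow
        right
        rw [Set.uIcc_of_le hLB.le]
        rintro ⟨h1, -⟩; linarith
      · apply Filter.eventuallyEq_iff_exists_mem.mpr
        refine ⟨Set.Ici L, ?_, fun x hx => by simp [hg, not_lt.mpr hx.out]⟩
        rw [mem_ae_iff]
        have : (Set.Ici L)ᶜ ∩ Set.uIoc L B = ∅ := by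
          rw [Set.uIoc_of_le hLB.le]
          ext x
          simp only [Set.mem_inter_iff, Set.mem_compl_iff, Set.mem_Ici, not_le,
            Set.mem_Ioc, Set.mem_empty_iff_false, iff_false, not_and]
          intro h1 h2; linarith
        rw [Measure.restrict_apply (by measurability), this]; simp
    have hsplit : (∫ t in r..L, g t) + (∫ t in L..B, g t) = ∫ t in r..B, g t :=
      intervalIntegral.integral_add_adjacent_intervals hint1 hint2
    have hgrL : (∫ t in r..L, g t) = L - r := by
      have : (∫ t in r..L, g t) = ∫ t in r..L, (1 : ℝ) := by
        apply intervalIntegral.integral_congr_ae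
        filter_upwards [show ∀ᵐ x : ℝ, x ≠ L by
          simpa [ae_iff] using (Real.volume_singleton (a := L))] with x hx hxmem
        rw [Set.uIoc_of_le hrL.le] at hxmem
        have : x < L := lt_of_le_of_ne hxmem.2 hx
        simp [hg, this]
      rw [this]; simp
    rw [hfg, ← hsplit, hgrL, key L (le_refl L) hLB, hFr]
    field_simp
    ring
  · -- L ≤ r : F r = 1 - L/r
    have hrL' : L ≤ r := not_lt.mp hrL
    have hr0' : 0 < r := lt_of_lt_of_le hL0 hrL'
    have hFr : F r = 1 - L / r := by rw [hF r]; simp [hrL, hrB]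
    rw [hfg, key r hrL' hrB, hFr]
    field_simp
    ring
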